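/- Let u : ℝⁿ → ℂ be a Schwartz function whose Fourier transform û is supported in the set {ξ ∈ ℝⁿ : |ξ| ≥ r} for some r > 0. Then ‖∇u‖_{L²(ℝⁿ)} ≥ r · ‖u‖_{L²(ℝⁿ)}, where ‖∇u‖²_{L²} = Σ_{j=1}^n ‖∂_{x_j} u‖²_{L²}. -/

import Mathlib

open MeasureTheory

/-- The Fourier transform `û(ξ) = ∫ e^{-i x·ξ} u(x) dx`, with the classical
normalization in which `∂_j u` corresponds to `i ξ_j û` (Plancherel holds up to
the fixed constant `(2π)^n`). -/
noncomputable def fourierInt {n : ℕ} (f : EuclideanSpace ℝ (Fin n) → ℂ)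
    (ξ : EuclideanSpace ℝ (Fin n)) : ℂ :=
  ∫ x : EuclideanSpace ℝ (Fin n),
    Complex.exp (-(Complex.I * ((inner ℝ x ξ : ℝ) : ℂ))) * f x


open FourierTransform Real SchwartzMap
open scoped RealInnerProductSpace

variable {n : ℕ}

local notation "V" => EuclideanSpace ℝ (Fin n)

lemma fourierInt_eq (f : V → ℂ) (ξ : V) :
    fourierInt f ξ = 𝓕 f ((2 * π)⁻¹ • ξ) := by
  rw [Real.fourier_eq']
  unfold fourierInt
  congr 1; ext x
  rw [smul_eq_mul]
  congr 2
  have h : ⟪x, (2 * π)⁻¹ • ξ⟫ = (2 * π)⁻¹ * ⟪x, ξ⟫ := real_inner_smul_right _ _ _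
  have h2 : -2 * π * ((2 * π)⁻¹ * ⟪x, ξ⟫) = -⟪x, ξ⟫ := by
    field_simp
  rw [h, h2]
  push_cast
  ring

lemma schwartz_integrable_sq (f : 𝓢(V, ℂ)) :
    Integrable (fun x : V => ‖f x‖ ^ 2) := by
  have h : Integrable (fun x : V => ‖f x‖ * ‖f x‖) :=
    f.integrable.norm.bdd_mul (c := SchwartzMap.seminorm ℝ 0 0 f)
      f.continuous.norm.aestronglyMeasurable
      (ae_of_all _ fun x => by
        simpa using norm_le_seminorm ℝ f x)
  simpa [pow_two] using h

lemma fourier_conj (f : V → ℂ) (w : V) :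
    𝓕 (fun x => (starRingEnd ℂ) (f x)) w = (starRingEnd ℂ) (𝓕⁻ f w) := by
  rw [Real.fourier_eq', Real.fourierInv_eq', ← integral_conj]
  congr 1; ext v
  rw [smul_eq_mul, smul_eq_mul, map_mul, ← Complex.exp_conj]
  rw [map_mul, Complex.conj_ofReal, Complex.conj_I]
  push_cast
  ring

lemma innerl_flip : (innerₗ (EuclideanSpace ℝ (Fin n))).flip = innerₗ (EuclideanSpace ℝ (Fin n)) :=
  LinearMap.ext fun x => LinearMap.ext fun y => real_inner_comm x y

lemma plancherel_schwartz (f : 𝓢(V, ℂ)) :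
    ∫ ξ : V, ‖𝓕 (⇑f) ξ‖ ^ 2 = ∫ x : V, ‖f x‖ ^ 2 := by
  set g := SchwartzMap.fourierTransformCLM ℂ f with hgdef
  have hg : ⇑g = 𝓕 ⇑f := rfl
  have hconj_int : Integrable (fun ξ : V => (starRingEnd ℂ) (g ξ)) := by
    refine g.integrable.norm.mono' ?_ ?_
    · exact (Complex.continuous_conj.comp g.continuous).aestronglyMeasurable
    · filter_upwards with x
      simp
  have key : (∫ ξ : V, 𝓕 (⇑f) ξ * (starRingEnd ℂ) (g ξ))
      = ∫ x : V, f x * 𝓕 (fun ξ => (starRingEnd ℂ) (g ξ)) x := by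
    have h := VectorFourier.integral_fourierIntegral_smul_eq_flip
      (e := Real.fourierChar) (L := innerₗ (EuclideanSpace ℝ (Fin n)))
      (μ := (volume : Measure V)) (ν := (volume : Measure V))
      Real.continuous_fourierChar continuous_inner f.integrable hconj_int
    rw [innerl_flip] at h
    simp only [smul_eq_mul] at h
    exact h
  have hinv : 𝓕⁻ (⇑g) = ⇑f := by
    rw [hg]
    exact Continuous.fourierInv_fourier_eq f.continuous f.integrable (hg ▸ g.integrable)
  have lhs : (∫ ξ : V, 𝓕 (⇑f) ξ * (starRingEnd ℂ) (g ξ))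
      = ((∫ ξ : V, ‖𝓕 (⇑f) ξ‖ ^ 2 : ℝ) : ℂ) := by
    calc (∫ ξ : V, 𝓕 (⇑f) ξ * (starRingEnd ℂ) (g ξ))
        = ∫ ξ : V, ((‖𝓕 (⇑f) ξ‖ ^ 2 : ℝ) : ℂ) := by
          congr 1; ext ξ
          rw [hg, RCLike.mul_conj]
          norm_num
      _ = _ := integral_ofReal
  have rhs : (∫ x : V, f x * 𝓕 (fun ξ => (starRingEnd ℂ) (g ξ)) x)
      = ((∫ x : V, ‖f x‖ ^ 2 : ℝ) : ℂ) := by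
    calc (∫ x : V, f x * 𝓕 (fun ξ => (starRingEnd ℂ) (g ξ)) x)
        = ∫ x : V, ((‖f x‖ ^ 2 : ℝ) : ℂ) := by
          congr 1; ext x
          rw [fourier_conj, hinv, RCLike.mul_conj]
          norm_num
      _ = _ := integral_ofReal
  have := lhs.symm.trans (key.trans rhs)
  exact_mod_cast this

lemma fourier_pderiv (u : 𝓢(V, ℂ)) (m : V) (w : V) :
    𝓕 (⇑(LineDeriv.lineDerivOp m u : 𝓢(V, ℂ))) w
      = (2 * π * Complex.I * ((⟪w, m⟫ : ℝ) : ℂ)) * 𝓕 (⇑u) w := by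
  have hcoe : (⇑(SchwartzMap.fderivCLM ℝ V ℂ u) : V → (V →L[ℝ] ℂ)) = fderiv ℝ ⇑u :=
    funext fun x => SchwartzMap.fderivCLM_apply (𝕜 := ℝ) (f := u) (x := x)
  have h1 : Integrable (fderiv ℝ (⇑u)) := hcoe ▸ (SchwartzMap.fderivCLM ℝ V ℂ u).integrable
  have h2 : 𝓕 (fderiv ℝ (⇑u)) = VectorFourier.fourierSMulRight (-(innerSL ℝ)) (𝓕 ⇑u) :=
    Real.fourier_fderiv u.integrable u.differentiable h1
  calc 𝓕 (⇑(LineDeriv.lineDerivOp m u : 𝓢(V, ℂ))) w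
      = 𝓕 (fun x => fderiv ℝ (⇑u) x m) w := rfl
    _ = 𝓕 (fderiv ℝ (⇑u)) w m := (Real.fourier_continuousLinearMap_apply h1).symm
    _ = _ := by
        rw [h2]
        rw [VectorFourier.fourierSMulRight_apply]
        simp only [ContinuousLinearMap.neg_apply, innerSL_apply_apply ℝ, smul_eq_mul, neg_smul,
          Complex.real_smul]
        ring

/-- If `u` is a Schwartz function on `ℝⁿ` whose Fourier
transform is supported in `{ξ : |ξ| ≥ r}` for some `r > 0`, then
`‖∇u‖_{L²} ≥ r ‖u‖_{L²}`, where `‖∇u‖²_{L²} = Σ_j ‖∂_{x_j} u‖²_{L²}`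
(stated with squared `L²` norms). -/
theorem bernstein_high_frequency
    {n : ℕ} (u : SchwartzMap (EuclideanSpace ℝ (Fin n)) ℂ) (r : ℝ) (hr : 0 < r)
    (hsupp : Function.support (fourierInt (⇑u)) ⊆ {ξ : EuclideanSpace ℝ (Fin n) | r ≤ ‖ξ‖}) :
    r ^ 2 * (∫ x : EuclideanSpace ℝ (Fin n), ‖u x‖ ^ 2) ≤
      ∫ x : EuclideanSpace ℝ (Fin n),
        ∑ j : Fin n, ‖fderiv ℝ (⇑u) x (EuclideanSpace.single j 1)‖ ^ 2 := by
  classical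
  set du : Fin n → 𝓢(EuclideanSpace ℝ (Fin n), ℂ) :=
    fun j => (LineDeriv.lineDerivOp (EuclideanSpace.single j (1 : ℝ)) u : 𝓢(EuclideanSpace ℝ (Fin n), ℂ)) with hdu
  have hFu_sq_int : Integrable (fun w : EuclideanSpace ℝ (Fin n) => ‖𝓕 (⇑u) w‖ ^ 2) :=
    schwartz_integrable_sq (SchwartzMap.fourierTransformCLM ℂ u)
  have hint : ∀ j, Integrable (fun w : EuclideanSpace ℝ (Fin n) => ‖𝓕 (⇑(du j)) w‖ ^ 2) := fun j =>
    schwartz_integrable_sq (SchwartzMap.fourierTransformCLM ℂ (du j))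
  have hsum : ∀ w : EuclideanSpace ℝ (Fin n), ∑ j : Fin n, ‖𝓕 (⇑(du j)) w‖ ^ 2
      = (2 * π) ^ 2 * ‖w‖ ^ 2 * ‖𝓕 (⇑u) w‖ ^ 2 := by
    intro w
    have hnorm : ∀ j : Fin n,
        ‖𝓕 (⇑(du j)) w‖ ^ 2 = (2 * π) ^ 2 * (w j) ^ 2 * ‖𝓕 (⇑u) w‖ ^ 2 := by
      intro j
      have hw : ((⟪w, EuclideanSpace.single j 1⟫ : ℝ)) = w j := by
        rw [EuclideanSpace.inner_single_right]
        simp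
      rw [hdu]
      rw [fourier_pderiv u (EuclideanSpace.single j 1) w, hw, norm_mul]
      have : ‖(2 * ↑π * Complex.I * ((w j : ℝ) : ℂ))‖ = 2 * π * |w j| := by
        simp [norm_mul, Complex.norm_real, Real.norm_eq_abs, abs_of_pos Real.pi_pos]
      rw [this]
      rw [mul_pow, mul_pow, mul_pow, sq_abs]
    rw [Finset.sum_congr rfl fun j _ => hnorm j]
    rw [← Finset.sum_mul, ← Finset.mul_sum]
    have hw2 : ∑ j : Fin n, (w j) ^ 2 = ‖w‖ ^ 2 := by
      rw [EuclideanSpace.norm_eq, Real.sq_sqrt (by positivity)]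
      exact Finset.sum_congr rfl fun j _ => by rw [Real.norm_eq_abs, sq_abs]
    rw [hw2]
  have hpoint : ∀ w : EuclideanSpace ℝ (Fin n), r ^ 2 * ‖𝓕 (⇑u) w‖ ^ 2 ≤ ∑ j : Fin n, ‖𝓕 (⇑(du j)) w‖ ^ 2 := by
    intro w
    rw [hsum w]
    rcases eq_or_ne (𝓕 (⇑u) w) 0 with h | h
    · simp [h]
    · have hmem : fourierInt (⇑u) ((2 * π : ℝ) • w) ≠ 0 := by
        rw [fourierInt_eq]
        have hsm : (2 * π : ℝ)⁻¹ • ((2 * π : ℝ) • w) = w := by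
          rw [smul_smul, inv_mul_cancel₀ (by positivity : (2 * π : ℝ) ≠ 0), one_smul]
        rwa [hsm]
      have hr2 : r ≤ ‖(2 * π : ℝ) • w‖ := hsupp (Function.mem_support.mpr hmem)
      have hle : r ≤ 2 * π * ‖w‖ := by
        rwa [norm_smul, Real.norm_eq_abs, abs_of_pos (by positivity)] at hr2
      have hsq : r ^ 2 ≤ (2 * π * ‖w‖) ^ 2 := pow_le_pow_left₀ hr.le hle 2
      calc r ^ 2 * ‖𝓕 (⇑u) w‖ ^ 2 ≤ (2 * π * ‖w‖) ^ 2 * ‖𝓕 (⇑u) w‖ ^ 2 :=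
            mul_le_mul_of_nonneg_right hsq (sq_nonneg _)
        _ = (2 * π) ^ 2 * ‖w‖ ^ 2 * ‖𝓕 (⇑u) w‖ ^ 2 := by ring
  calc r ^ 2 * ∫ x : EuclideanSpace ℝ (Fin n), ‖u x‖ ^ 2
      = r ^ 2 * ∫ w : EuclideanSpace ℝ (Fin n), ‖𝓕 (⇑u) w‖ ^ 2 := by rw [plancherel_schwartz u]
    _ = ∫ w : EuclideanSpace ℝ (Fin n), r ^ 2 * ‖𝓕 (⇑u) w‖ ^ 2 := (integral_const_mul _ _).symm
    _ ≤ ∫ w : EuclideanSpace ℝ (Fin n), ∑ j : Fin n, ‖𝓕 (⇑(du j)) w‖ ^ 2 :=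
        integral_mono (hFu_sq_int.const_mul _)
          (integrable_finset_sum _ fun j _ => hint j) hpoint
    _ = ∑ j : Fin n, ∫ w : EuclideanSpace ℝ (Fin n), ‖𝓕 (⇑(du j)) w‖ ^ 2 :=
        integral_finset_sum _ fun j _ => hint j
    _ = ∑ j : Fin n, ∫ x : EuclideanSpace ℝ (Fin n), ‖du j x‖ ^ 2 :=
        Finset.sum_congr rfl fun j _ => plancherel_schwartz (du j)
    _ = ∫ x : EuclideanSpace ℝ (Fin n), ∑ j : Fin n, ‖du j x‖ ^ 2 :=
        (integral_finset_sum _ fun j _ => schwartz_integrable_sq (du j)).symm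
    _ = ∫ x : EuclideanSpace ℝ (Fin n), ∑ j : Fin n, ‖fderiv ℝ (⇑u) x (EuclideanSpace.single j 1)‖ ^ 2 := by congr 1
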